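/- arXiv:1504.00998 — 4 statements merged into one kernel-verified Lean document; each statement's English description precedes it below -/
import Mathlib

section
/- Let f satisfy f(u) ≤ f'(0)u for u ≥ 0, and let φ > 0 on (0,ℓ) be an eigenfunction of −φ'' + βφ' − f'(0)φ = ζ₁φ with ζ₁ > 0 and k,m > 0 such that xφ'(x) ≤ kφ(x) on [0,h₀] and φ'(x) ≤ mφ(x) on [0,x₀], φ' < 0 on [x₀,h₀], with β ≤ 0. Then for all sufficiently small σ > 0, the function w(t,x) = M e^{−σt} φ(x/s(t)) with s(t) = 1 + 2σ − σe^{−σt} satisfies w_t − w_{xx} + βw_x − f(w) > 0 for t > 0, 0 < x < h₀ s(t). -/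
open Real Set

set_option maxHeartbeats 1000000

lemma auxt (σ t x M : ℝ) (φ : ℝ → ℝ) (hφ : Differentiable ℝ φ)
    (hS : 1 + 2*σ - σ*Real.exp (-σ*t) ≠ 0) :
    deriv (fun τ => M * Real.exp (-σ*τ) * φ (x / (1 + 2*σ - σ*Real.exp (-σ*τ)))) t
    = M * (Real.exp (-σ*t) * -σ) * φ (x / (1 + 2*σ - σ*Real.exp (-σ*t)))
      + M * Real.exp (-σ*t) * (deriv φ (x / (1 + 2*σ - σ*Real.exp (-σ*t))) *
          ((0 * (1 + 2*σ - σ*Real.exp (-σ*t)) - x * (σ^2 * Real.exp (-σ*t)))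
            / (1 + 2*σ - σ*Real.exp (-σ*t))^2)) := by
  have hlin : HasDerivAt (fun τ : ℝ => -σ*τ) (-σ) t := by
    simpa using (hasDerivAt_id t).const_mul (-σ)
  have hexp := hlin.exp
  have hDen : HasDerivAt (fun τ => 1 + 2*σ - σ*Real.exp (-σ*τ)) (σ^2 * Real.exp (-σ*t)) t := by
    have h := (hexp.const_mul σ).const_sub (1 + 2*σ)
    exact h.congr_deriv (by ring)
  have hfrac := (hasDerivAt_const t x).div hDen hS
  have hcomp := (hφ (x / (1 + 2*σ - σ*Real.exp (-σ*t)))).hasDerivAt.comp t hfrac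
  have hall := (hexp.const_mul M).mul hcomp
  exact hall.deriv

lemma auxs (C a : ℝ) (φ : ℝ → ℝ) (hφ : Differentiable ℝ φ) :
    deriv (fun y => C * φ (y / a)) = fun y => C * (deriv φ (y / a) * (1/a)) := by
  funext y
  have hin : HasDerivAt (fun y : ℝ => y / a) (1/a) y := by
    simpa using (hasDerivAt_id y).div_const a
  have := ((hφ (y/a)).hasDerivAt.comp y hin).const_mul C
  exact this.deriv

lemma auxs2 (C a x : ℝ) (ψ : ℝ → ℝ) (hψ : Differentiable ℝ ψ) :
    deriv (fun y => C * (ψ (y / a) * (1/a))) x = C * (deriv ψ (x/a) * (1/a) * (1/a)) := by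
  have hin : HasDerivAt (fun y : ℝ => y / a) (1/a) x := by
    simpa using (hasDerivAt_id x).div_const a
  have h2 := (((hψ (x/a)).hasDerivAt.comp x hin).mul_const (1/a)).const_mul C
  exact h2.deriv

theorem stmt3 (f : ℝ → ℝ) (β h₀ M ζ₁ k m x₀ : ℝ)
    (hf : ContDiffOn ℝ 1 f (Ici 0))
    (hfle : ∀ u ≥ (0:ℝ), f u ≤ deriv f 0 * u)
    (hβ : β ≤ 0) (hh₀ : 0 < h₀) (hM : 0 < M) (hζ₁ : 0 < ζ₁)
    (φ : ℝ → ℝ) (hφ2 : ContDiff ℝ 2 φ)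
    (hφpos : ∀ x ∈ Ioo (0:ℝ) h₀, 0 < φ x)
    (hode : ∀ x ∈ Icc (0:ℝ) h₀,
      -(deriv (deriv φ) x) + β * deriv φ x = (ζ₁ + deriv f 0) * φ x)
    (hk : 0 < k) (hm : 0 < m) (hx₀ : 0 < x₀) (hx₀h : x₀ < h₀)
    (hkφ : ∀ x ∈ Icc (0:ℝ) h₀, x * deriv φ x ≤ k * φ x)
    (hmφ : ∀ x ∈ Icc (0:ℝ) x₀, deriv φ x ≤ m * φ x)
    (hφ' : ∀ x ∈ Icc x₀ h₀, deriv φ x < 0) :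
    ∃ σ₀ > (0:ℝ), ∀ σ, 0 < σ → σ < σ₀ →
      ∀ s w : ℝ → ℝ → ℝ,
        (∀ t x, s t x = 1 + 2 * σ - σ * exp (-σ * t)) →
        (∀ t x, w t x = M * exp (-σ * t) * φ (x / s t x)) →
        ∀ t > (0:ℝ), ∀ x, 0 < x → x < h₀ * s t x →
          0 < deriv (fun τ => w τ x) t - deriv (deriv (fun y => w t y)) x
              + β * deriv (fun y => w t y) x - f (w t x) := by
  set c := deriv f 0 with hc
  have hden : (0:ℝ) < 8 * |c| + 9 + 9*k + 18 * |β| * m := by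
    nlinarith [abs_nonneg c, mul_nonneg (abs_nonneg β) hm.le, hk]
  refine ⟨min 1 (ζ₁ / (8 * |c| + 9 + 9*k + 18 * |β| * m)), lt_min one_pos (div_pos hζ₁ hden), ?_⟩
  intro σ hσ0 hσlt s w hs hw t ht x hx0 hxlt
  have hσ1 : σ ≤ 1 := le_of_lt (lt_of_lt_of_le hσlt (min_le_left _ _))
  have hσD : σ * (8 * |c| + 9 + 9*k + 18 * |β| * m) < ζ₁ := by
    have h1 : σ < ζ₁ / (8 * |c| + 9 + 9*k + 18 * |β| * m) :=
      lt_of_lt_of_le hσlt (min_le_right _ _)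
    exact (lt_div_iff₀ hden).mp h1
  have hd1 : Differentiable ℝ φ := hφ2.differentiable (by norm_num)
  have hd2 : Differentiable ℝ (deriv φ) :=
    ((contDiff_succ_iff_deriv.mp
      (by exact_mod_cast hφ2 : ContDiff ℝ (1+1) φ)).2.2).differentiable one_ne_zero
  have hEpos : (0:ℝ) < Real.exp (-σ*t) := Real.exp_pos _
  have hE1 : Real.exp (-σ*t) ≤ 1 := Real.exp_le_one_iff.mpr (by nlinarith)
  have hane : 1 + 2*σ - σ*Real.exp (-σ*t) ≠ 0 := by nlinarith [mul_pos hσ0 hEpos]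
  -- rewrite the goal into explicit closed form
  have hfun1 : (fun τ => w τ x)
      = fun τ => M * Real.exp (-σ*τ) * φ (x / (1 + 2*σ - σ*Real.exp (-σ*τ))) := by
    funext τ; rw [hw, hs]
  have hfun2 : (fun y => w t y)
      = fun y => M * Real.exp (-σ*t) * φ (y / (1 + 2*σ - σ*Real.exp (-σ*t))) := by
    funext y; rw [hw, hs]
  have hwtx : w t x = M * Real.exp (-σ*t) * φ (x / (1 + 2*σ - σ*Real.exp (-σ*t))) := by
    rw [hw, hs]
  rw [hfun1, hfun2, hwtx, auxt σ t x M φ hd1 hane,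
    auxs (M * Real.exp (-σ*t)) (1 + 2*σ - σ*Real.exp (-σ*t)) φ hd1,
    auxs2 (M * Real.exp (-σ*t)) (1 + 2*σ - σ*Real.exp (-σ*t)) x (deriv φ) hd2]
  beta_reduce
  rw [hs] at hxlt
  -- abbreviations
  set E := Real.exp (-σ*t) with hEdef
  set a := 1 + 2*σ - σ*E with hadef
  set ξ := x / a with hξdef
  set P := φ ξ with hPdef
  set Q := deriv φ ξ with hQdef
  set R := deriv (deriv φ) ξ with hRdef
  clear_value R Q P
  have ha1 : 1 ≤ a := by
    rw [hadef]; nlinarith [mul_nonneg hσ0.le (sub_nonneg.mpr hE1)]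
  have hapos : 0 < a := by linarith
  have ha2σ : a ≤ 1 + 2*σ := by
    rw [hadef]; nlinarith [mul_pos hσ0 hEpos]
  have ha3 : a ≤ 3 := by linarith
  have hξ0 : 0 < ξ := by rw [hξdef]; exact div_pos hx0 hapos
  have hξh : ξ < h₀ := by
    rw [hξdef, div_lt_iff₀ hapos]; linarith
  have hxa : x = ξ * a := by
    rw [hξdef]; field_simp
  clear_value ξ a E
  have hξIcc : ξ ∈ Icc (0:ℝ) h₀ := ⟨hξ0.le, hξh.le⟩
  have hPpos : 0 < P := by rw [hPdef]; exact hφpos ξ ⟨hξ0, hξh⟩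
  have hRode : R = β*Q - (ζ₁ + c)*P := by
    have h := hode ξ hξIcc
    rw [← hPdef, ← hQdef, ← hRdef] at h
    linarith
  have hnn : (0:ℝ) ≤ M * E * P :=
    mul_nonneg (mul_nonneg hM.le hEpos.le) hPpos.le
  have key : ∀ X : ℝ, 0 < X - c * (M * E * P) → 0 < X - f (M * E * P) := by
    intro X h
    have hfb : f (M * E * P) ≤ c * (M * E * P) := hfle _ hnn
    linarith
  apply key
  rw [hRode, hxa]
  -- main estimates
  have hkQ : ξ * Q ≤ k * P := by
    rw [hPdef, hQdef]; exact hkφ ξ hξIcc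
  have u1 : ξ*Q*(σ^2*E)*a ≤ k*P*(3*σ) := by
    have hQa : (0:ℝ) ≤ σ^2*E*a := mul_nonneg (mul_nonneg (sq_nonneg σ) hEpos.le) hapos.le
    have s1 : ξ*Q*(σ^2*E*a) ≤ (k*P)*(σ^2*E*a) := mul_le_mul_of_nonneg_right hkQ hQa
    have s2 : σ^2*E*a ≤ 3*σ := by
      linarith [mul_nonneg (mul_nonneg (sq_nonneg σ) (by linarith : (0:ℝ) ≤ 1 - E)) hapos.le,
        mul_nonneg (sq_nonneg σ) (by linarith : (0:ℝ) ≤ 3 - a),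
        mul_nonneg hσ0.le (by linarith : (0:ℝ) ≤ 1 - σ)]
    have s3 : (k*P)*(σ^2*E*a) ≤ (k*P)*(3*σ) :=
      mul_le_mul_of_nonneg_left s2 (mul_pos hk hPpos).le
    linarith [s1, s3]
  have hb2 : β*(m*P) ≤ β*Q := by
    rcases le_or_gt ξ x₀ with hcase | hcase
    · have h := hmφ ξ ⟨hξ0.le, hcase⟩
      rw [← hPdef, ← hQdef] at h
      exact mul_le_mul_of_nonpos_left h hβ
    · have h := hφ' ξ ⟨hcase.le, hξh.le⟩
      rw [← hQdef] at h
      nlinarith [mul_nonneg (neg_nonneg.mpr hβ) (neg_nonneg.mpr h.le),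
        mul_nonneg (neg_nonneg.mpr hβ) (mul_pos hm hPpos).le]
  have hβmP : β*(m*P) ≤ 0 := by nlinarith [mul_pos hm hPpos]
  have u2 : β*(m*P)*(2*σ) ≤ β*Q*(a-1) := by
    have step1 : β*(m*P)*(2*σ) ≤ β*(m*P)*(a-1) :=
      mul_le_mul_of_nonpos_left (by linarith : a - 1 ≤ 2*σ) hβmP
    have step2 : β*(m*P)*(a-1) ≤ β*Q*(a-1) :=
      mul_le_mul_of_nonneg_right hb2 (by linarith)
    linarith
  have ha2low : 1 ≤ a^2 := by nlinarith
  have ha2hi : a^2 ≤ 1 + 8*σ := by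
    nlinarith [mul_nonneg hσ0.le (by linarith : (0:ℝ) ≤ 1 - σ)]
  have h9 : a^2 ≤ 9 := by nlinarith
  have hc1 : 0 ≤ c*(1 - a^2) + 8*σ*|c| := by
    rcases abs_cases c with ⟨h1, h2⟩ | ⟨h1, h2⟩
    · rw [h1]
      nlinarith [mul_nonneg h2 (show (0:ℝ) ≤ 1 - a^2 + 8*σ by linarith)]
    · rw [h1]
      nlinarith [mul_nonneg (neg_nonneg.mpr h2.le) (by linarith : (0:ℝ) ≤ a^2 - 1),
        mul_nonneg hσ0.le (neg_nonneg.mpr h2.le)]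
  have u3 : P*(ζ₁ - 8*σ*|c| - 9*σ) ≤ P*(-σ-c)*a^2 + (ζ₁+c)*P := by
    linarith [mul_nonneg hPpos.le (mul_nonneg hσ0.le (by linarith : (0:ℝ) ≤ 9 - a^2)),
      mul_nonneg hPpos.le hc1]
  have h5 : 0 < ζ₁ - 8*σ*|c| - 9*σ - 3*k*σ + 2*σ*β*m := by
    have habsβ : |β| = -β := abs_of_nonpos hβ
    rw [habsβ] at hσD
    linarith [mul_pos hσ0 hk,
      mul_nonneg (mul_nonneg hσ0.le (neg_nonneg.mpr hβ)) hm.le]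
  have hinner : 0 < P*(-σ-c)*a^2 + (ζ₁+c)*P - ξ*Q*(σ^2*E)*a + β*Q*(a-1) := by
    linarith [u1, u2, u3, mul_pos hPpos h5]
  have hG : 0 < (M*E) * (P*(-σ-c)*a^2 + (ζ₁+c)*P - ξ*Q*(σ^2*E)*a + β*Q*(a-1)) / a^2 :=
    div_pos (mul_pos (mul_pos hM hEpos) hinner) (pow_pos hapos 2)
  convert hG using 1
  field_simp
  ring
end

section
/- Let ṽ : [0,∞) → ℝ be an increasing solution of v'' − βv' + f(v) = 0 with ṽ(∞) = 1, where f is C¹, f(1) = 0, f'(1) < 0. Then there exist positive constants K and ρ such that 1 − ṽ(z) ≤ K e^{−ρz} for all z ≥ 0. -/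
open Real Set Filter

theorem stmt8 (f : ℝ → ℝ) (β : ℝ) (v : ℝ → ℝ)
    (hf : ContDiffOn ℝ 1 f (Ici 0))
    (hf0 : f 0 = 0) (hf1 : f 1 = 0)
    (hfsign : ∀ u > (0:ℝ), u ≠ 1 → 0 < (1 - u) * f u)
    (hf'0 : 0 < deriv f 0) (hf'1 : deriv f 1 < 0)
    (hβ : |β| < 2 * Real.sqrt (deriv f 0))
    (hv2 : ContDiff ℝ 2 v)
    (hode : ∀ z ≥ (0:ℝ), deriv (deriv v) z - β * deriv v z + f (v z) = 0)
    (hrange : ∀ z ≥ (0:ℝ), 0 ≤ v z ∧ v z < 1)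
    (hv' : ∀ z ≥ (0:ℝ), 0 < deriv v z)
    (hlim : Tendsto v atTop (nhds 1)) :
    ∃ K > (0:ℝ), ∃ ρ > (0:ℝ), ∀ z ≥ (0:ℝ), 1 - v z ≤ K * exp (-ρ * z) := by
  -- basic smoothness facts about v
  have hvd : Differentiable ℝ v := hv2.differentiable (by norm_num)
  have hdvd : Differentiable ℝ (deriv v) := by
    have h2 : ContDiff ℝ ((1:ℕ) + 1) v := by exact_mod_cast hv2
    exact ((contDiff_succ_iff_deriv.mp h2).2.2).differentiable (by norm_num)
  -- the constant c : linear lower bound for f near 1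
  set c : ℝ := -deriv f 1 / 2 with hc
  have hcpos : 0 < c := by simp only [hc]; linarith
  -- f is differentiable at 1
  have hfd : HasDerivAt f (deriv f 1) 1 := by
    have h1 : Ici (0:ℝ) ∈ nhds (1:ℝ) :=
      mem_of_superset (Ioi_mem_nhds one_pos) Ioi_subset_Ici_self
    exact ((hf.contDiffAt h1).differentiableAt (by norm_num)).hasDerivAt
  -- eventual linear lower bound on f (v z)
  have hev : ∀ᶠ z in atTop, z ≥ (0:ℝ) → c * (1 - v z) ≤ f (v z) := by
    have hlo := (hasDerivAt_iff_isLittleO.mp hfd).def hcpos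
    filter_upwards [hlim.eventually hlo] with z hb hz0
    obtain ⟨h0, h1'⟩ := hrange z hz0
    have habs : ‖v z - 1‖ = 1 - v z := by
      rw [Real.norm_eq_abs, abs_of_nonpos (by linarith)]; ring
    rw [hf1, habs] at hb
    have hb' : |f (v z) - 0 - (v z - 1) * deriv f 1| ≤ c * (1 - v z) := by
      simpa [Real.norm_eq_abs, smul_eq_mul] using hb
    have := (abs_le.mp hb').1
    nlinarith [this, hcpos.le, sub_nonneg.mpr h1'.le]
  obtain ⟨Z0, hZ0⟩ := eventually_atTop.mp hev
  set Z : ℝ := max Z0 0 with hZ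
  have hZnn : (0:ℝ) ≤ Z := le_max_right _ _
  have key : ∀ z ≥ Z, c * (1 - v z) ≤ f (v z) := fun z hz =>
    hZ0 z (le_trans (le_max_left _ _) hz) (le_trans hZnn hz)
  -- the roots
  set s : ℝ := Real.sqrt (β ^ 2 + 4 * c) with hs
  have hs2 : s ^ 2 = β ^ 2 + 4 * c := Real.sq_sqrt (by positivity)
  have hsβ : |β| < s := by
    have h1 : Real.sqrt (β ^ 2) < s := Real.sqrt_lt_sqrt (sq_nonneg β) (by linarith)
    rwa [Real.sqrt_sq_eq_abs] at h1
  set ρ : ℝ := (s - β) / 2 with hρ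
  set μ : ℝ := (β + s) / 2 with hμ
  have hρpos : 0 < ρ := by
    have := le_abs_self β; simp only [hρ]; linarith
  have hμpos : 0 < μ := by
    have := neg_abs_le β; simp only [hμ]; linarith
  have hμρ : μ * ρ = c := by
    have h4 : μ * ρ = (s ^ 2 - β ^ 2) / 4 := by ring
    rw [h4, hs2]; ring
  -- the auxiliary function g
  set g : ℝ → ℝ := fun z => -(deriv v z) + ρ * (1 - v z) with hg
  have hgd : ∀ z : ℝ, HasDerivAt g (-(deriv (deriv v) z) + ρ * (-(deriv v z))) z := by
    intro z
    exact ((hdvd z).hasDerivAt.neg).add ((((hvd z).hasDerivAt).const_sub 1).const_mul ρ)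
  -- the key differential inequality for g on [Z, ∞)
  have hgineq : ∀ z ≥ Z, μ * g z ≤ -(deriv (deriv v) z) + ρ * (-(deriv v z)) := by
    intro z hz
    have hode' := hode z (le_trans hZnn hz)
    have hkey := key z hz
    have heq : -(deriv (deriv v) z) + ρ * (-(deriv v z)) - μ * g z
        = f (v z) - c * (1 - v z) := by
      simp only [hg]
      have hd2 : deriv (deriv v) z = β * deriv v z - f (v z) := by linarith
      rw [hd2, ← hμρ]; ring
    linarith
  -- Claim: g ≤ 0 on [Z, ∞)
  have hgle : ∀ z ≥ Z, g z ≤ 0 := by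
    intro z₁ hz₁
    by_contra hpos
    push_neg at hpos
    set a : ℝ := g z₁ with ha
    -- h := e^{-μ z} g z is monotone on [z₁, ∞)
    set h : ℝ → ℝ := fun z => Real.exp (-(μ * z)) * g z with hh
    have hhd : ∀ z : ℝ, HasDerivAt h
        (Real.exp (-(μ * z)) * -(μ * 1) * g z
          + Real.exp (-(μ * z)) * (-(deriv (deriv v) z) + ρ * (-(deriv v z)))) z := by
      intro z
      exact (((hasDerivAt_id z).const_mul μ).neg.exp).mul (hgd z)
    have hmono : MonotoneOn h (Ici z₁) := by
      apply monotoneOn_of_deriv_nonneg (convex_Ici z₁)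
      · exact fun x _ => ((hhd x).continuousAt).continuousWithinAt
      · exact fun x _ => ((hhd x).differentiableAt).differentiableWithinAt
      · intro x hx
        rw [interior_Ici] at hx
        rw [(hhd x).deriv]
        have hxZ : x ≥ Z := le_trans hz₁ (le_of_lt hx)
        have h5 := hgineq x hxZ
        have hex : (0:ℝ) < Real.exp (-(μ * x)) := Real.exp_pos _
        nlinarith
    -- hence g grows exponentially
    have hgrow : ∀ z ≥ z₁, a * Real.exp (μ * (z - z₁)) ≤ g z := by
      intro z hz
      have hmn := hmono (self_mem_Ici) (mem_Ici.mpr hz) hz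
      simp only [hh] at hmn
      rw [← sub_nonneg]
      have e1 : Real.exp (-(μ * z)) * Real.exp (μ * z) = 1 := by
        rw [← Real.exp_add]; simp
      have e2 : Real.exp (-(μ * z₁)) * Real.exp (μ * z) = Real.exp (μ * (z - z₁)) := by
        rw [← Real.exp_add]; ring_nf
      have expand : g z - a * Real.exp (μ * (z - z₁))
          = (Real.exp (-(μ * z)) * g z - Real.exp (-(μ * z₁)) * a) * Real.exp (μ * z) := by
        linear_combination (-(g z)) * e1 + a * e2
      rw [expand]
      exact mul_nonneg (by simp only [ha]; linarith) (Real.exp_pos _).le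
    -- choose z₂ with a * exp(μ (z₂ - z₁)) > ρ ; contradiction with v' > 0
    have h1 : Tendsto (fun z : ℝ => μ * (z - z₁)) atTop atTop := by
      apply Tendsto.const_mul_atTop hμpos
      simpa [sub_eq_add_neg] using tendsto_atTop_add_const_right atTop (-z₁) tendsto_id
    have htend : Tendsto (fun z => a * Real.exp (μ * (z - z₁))) atTop atTop :=
      (Real.tendsto_exp_atTop.comp h1).const_mul_atTop hpos
    obtain ⟨z₂, hbig, hz₂⟩ := ((htend.eventually_gt_atTop ρ).and (eventually_ge_atTop z₁)).exists
    have hz₂Z : z₂ ≥ Z := le_trans hz₁ hz₂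
    have hz₂0 : z₂ ≥ 0 := le_trans hZnn hz₂Z
    have hgz₂ : ρ < g z₂ := lt_of_lt_of_le hbig (hgrow z₂ hz₂)
    have hv'z₂ := hv' z₂ hz₂0
    have hr := hrange z₂ hz₂0
    have hle : g z₂ ≤ ρ := by
      simp only [hg]
      nlinarith [mul_nonneg hρpos.le hr.1]
    linarith
  -- Now w := e^{ρ z} (1 - v z) is antitone on [Z, ∞)
  set w : ℝ → ℝ := fun z => Real.exp (ρ * z) * (1 - v z) with hw
  have hwd : ∀ z : ℝ, HasDerivAt w
      (Real.exp (ρ * z) * (ρ * 1) * (1 - v z) + Real.exp (ρ * z) * (-(deriv v z))) z := by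
    intro z
    exact (((hasDerivAt_id z).const_mul ρ).exp).mul (((hvd z).hasDerivAt).const_sub 1)
  have hanti : AntitoneOn w (Ici Z) := by
    apply antitoneOn_of_deriv_nonpos (convex_Ici Z)
    · exact fun x _ => ((hwd x).continuousAt).continuousWithinAt
    · exact fun x _ => ((hwd x).differentiableAt).differentiableWithinAt
    · intro x hx
      rw [interior_Ici] at hx
      rw [(hwd x).deriv]
      have hgx := hgle x (le_of_lt hx)
      have hex : (0:ℝ) < Real.exp (ρ * x) := Real.exp_pos _
      have heq : Real.exp (ρ * x) * (ρ * 1) * (1 - v x) + Real.exp (ρ * x) * (-(deriv v x))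
          = Real.exp (ρ * x) * g x := by simp only [hg]; ring
      rw [heq]
      exact mul_nonpos_of_nonneg_of_nonpos hex.le hgx
  -- conclusion
  refine ⟨Real.exp (ρ * Z), Real.exp_pos _, ρ, hρpos, ?_⟩
  intro z hz0
  rcases le_or_gt Z z with hzZ | hzZ
  · have hmn := hanti (self_mem_Ici) (mem_Ici.mpr hzZ) hzZ
    simp only [hw] at hmn
    have hvZ := hrange Z hZnn
    have h1 : Real.exp (ρ * z) * (1 - v z) ≤ Real.exp (ρ * Z) := by
      have h6 : Real.exp (ρ * Z) * (1 - v Z) ≤ Real.exp (ρ * Z) * 1 :=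
        mul_le_mul_of_nonneg_left (by linarith [hvZ.1]) (Real.exp_pos _).le
      linarith
    have h2 := mul_le_mul_of_nonneg_right h1 (Real.exp_pos (-ρ * z)).le
    have e1 : Real.exp (ρ * z) * Real.exp (-ρ * z) = 1 := by
      rw [← Real.exp_add]; norm_num
    calc 1 - v z = Real.exp (ρ * z) * Real.exp (-ρ * z) * (1 - v z) := by rw [e1]; ring
      _ = Real.exp (ρ * z) * (1 - v z) * Real.exp (-ρ * z) := by ring
      _ ≤ Real.exp (ρ * Z) * Real.exp (-ρ * z) := h2
  · have hr := hrange z hz0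
    have h1 : 1 - v z ≤ 1 := by linarith [hr.1]
    have h2 : (1:ℝ) ≤ Real.exp (ρ * Z) * Real.exp (-ρ * z) := by
      rw [← Real.exp_add]
      apply Real.one_le_exp
      nlinarith [mul_nonneg hρpos.le (sub_nonneg.mpr hzZ.le)]
    linarith
end

section
/- Let f'(0) > 0, c₀ = 2√(f'(0)), β ≥ c₀, and let f satisfy f(u) ≤ f'(0)u for u ≥ 0. Let h₀ > 0 and choose δ > 0 small so that π²/(h₀²(1+δ)²) ≥ 4δ + βh₀δ². Set g(t) = h₀(1 + δ − (δ/2)e^{−δt}), ε = (h₀²δ²/(πμ))(1 + δ/2), and w(t,x) = ε e^{−δt} e^{(β/2)(x−g(t))} cos(πx/(2g(t))) for 0 ≤ x ≤ g(t). Then w(t, g(t)) = 0, g'(t) ≥ −μ w_x(t, g(t)), and w_t − w_{xx} + β w_x − f(w) ≥ 0 for t > 0, 0 ≤ x ≤ g(t). -/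
open Real Set

lemma wx_deriv (c β G : ℝ) (x : ℝ) :
    HasDerivAt (fun y => c * Real.exp (β / 2 * (y - G)) * Real.cos (π * y / (2 * G)))
      (c * Real.exp (β / 2 * (x - G)) *
        (β / 2 * Real.cos (π * x / (2 * G)) - π / (2 * G) * Real.sin (π * x / (2 * G)))) x := by
  have h1 : HasDerivAt (fun y : ℝ => β / 2 * (y - G)) (β / 2) x := by
    simpa using ((hasDerivAt_id x).sub_const G).const_mul (β / 2)
  have h3 : HasDerivAt (fun y : ℝ => π * y / (2 * G)) (π / (2 * G)) x := by
    simpa using ((hasDerivAt_id x).const_mul π).div_const (2 * G)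
  have h5 := (h1.exp.const_mul c).mul h3.cos
  refine h5.congr_deriv ?_
  ring

lemma wxx_deriv (c β G : ℝ) (hG : G ≠ 0) (x : ℝ) :
    HasDerivAt (fun y => c * Real.exp (β / 2 * (y - G)) *
        (β / 2 * Real.cos (π * y / (2 * G)) - π / (2 * G) * Real.sin (π * y / (2 * G))))
      (c * Real.exp (β / 2 * (x - G)) *
        ((β ^ 2 / 4 - π ^ 2 / (4 * G ^ 2)) * Real.cos (π * x / (2 * G))
          - β * π / (2 * G) * Real.sin (π * x / (2 * G)))) x := by
  have h1 : HasDerivAt (fun y : ℝ => β / 2 * (y - G)) (β / 2) x := by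
    simpa using ((hasDerivAt_id x).sub_const G).const_mul (β / 2)
  have h3 : HasDerivAt (fun y : ℝ => π * y / (2 * G)) (π / (2 * G)) x := by
    simpa using ((hasDerivAt_id x).const_mul π).div_const (2 * G)
  have h5 := (h1.exp.const_mul c).mul
    ((h3.cos.const_mul (β / 2)).sub (h3.sin.const_mul (π / (2 * G))))
  refine h5.congr_deriv ?_
  simp only [Pi.mul_apply, Pi.sub_apply]
  field_simp
  ring

lemma wt_deriv (c δ β x t : ℝ) (g : ℝ → ℝ) (G' : ℝ) (hG : HasDerivAt g G' t)
    (hgt : g t ≠ 0) :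
    HasDerivAt (fun τ => c * Real.exp (-δ * τ) * Real.exp (β / 2 * (x - g τ))
        * Real.cos (π * x / (2 * g τ)))
      (c * Real.exp (-δ * t) * Real.exp (β / 2 * (x - g t)) *
        ((-δ - β / 2 * G') * Real.cos (π * x / (2 * g t))
          + Real.sin (π * x / (2 * g t)) * (π * x * G' / (2 * (g t) ^ 2)))) t := by
  have hneg : HasDerivAt (fun τ : ℝ => -δ * τ) (-δ) t := by
    simpa using (hasDerivAt_id t).const_mul (-δ)
  have hA := hneg.exp.const_mul c
  have hEi : HasDerivAt (fun τ : ℝ => β / 2 * (x - g τ)) (β / 2 * (0 - G')) t :=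
    ((hasDerivAt_const t x).sub hG).const_mul (β / 2)
  have hCi : HasDerivAt (fun τ : ℝ => π * x / (2 * g τ))
      ((0 * (2 * g t) - (π * x) * (2 * G')) / (2 * g t) ^ 2) t :=
    (hasDerivAt_const t (π * x)).div (hG.const_mul 2) (by simpa using hgt)
  have h5 := (hA.mul hEi.exp).mul hCi.cos
  refine h5.congr_deriv ?_
  simp only [Pi.mul_apply, Pi.sub_apply]
  field_simp
  ring

set_option maxHeartbeats 1000000 in
theorem stmt12 (f : ℝ → ℝ) (β h₀ μ δ : ℝ)
    (hf : ContDiffOn ℝ 1 f (Ici 0))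
    (hf'0 : 0 < deriv f 0)
    (hβ : 2 * Real.sqrt (deriv f 0) ≤ β)
    (hfle : ∀ u ≥ (0:ℝ), f u ≤ deriv f 0 * u)
    (hh₀ : 0 < h₀) (hμ : 0 < μ) (hδ : 0 < δ) (hδ1 : δ < 1)
    (hδsmall : π ^ 2 / (h₀ ^ 2 * (1 + δ) ^ 2) ≥ 4 * δ + β * h₀ * δ ^ 2)
    (g : ℝ → ℝ) (hg : g = fun t => h₀ * (1 + δ - δ / 2 * exp (-δ * t)))
    (ε : ℝ) (hε : ε = h₀ ^ 2 * δ ^ 2 / (π * μ) * (1 + δ / 2))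
    (w : ℝ → ℝ → ℝ)
    (hw : w = fun t x => ε * exp (-δ * t) * exp (β / 2 * (x - g t))
        * cos (π * x / (2 * g t))) :
    (∀ t ≥ (0:ℝ), w t (g t) = 0) ∧
    (∀ t ≥ (0:ℝ), deriv g t ≥ -μ * deriv (fun y => w t y) (g t)) ∧
    (∀ t > (0:ℝ), ∀ x, 0 ≤ x → x ≤ g t →
      0 ≤ deriv (fun τ => w τ x) t - deriv (deriv (fun y => w t y)) x
          + β * deriv (fun y => w t y) x - f (w t x)) := by
  have hπ := Real.pi_pos
  have hβpos : 0 < β :=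
    lt_of_lt_of_le (by positivity) hβ
  have hεpos : 0 < ε := by rw [hε]; positivity
  have hgderiv : ∀ s : ℝ, HasDerivAt g (h₀ * δ ^ 2 / 2 * exp (-δ * s)) s := by
    intro s
    rw [hg]
    have hneg : HasDerivAt (fun τ : ℝ => -δ * τ) (-δ) s := by
      simpa using (hasDerivAt_id s).const_mul (-δ)
    have h := ((hasDerivAt_const s (1 + δ)).sub (hneg.exp.const_mul (δ / 2))).const_mul h₀
    refine h.congr_deriv ?_
    ring
  have hglb : ∀ s ≥ (0:ℝ), h₀ * (1 + δ / 2) ≤ g s := by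
    intro s hs
    rw [hg]
    beta_reduce
    have he : exp (-δ * s) ≤ 1 := Real.exp_le_one_iff.mpr (by nlinarith)
    nlinarith [mul_nonneg (mul_nonneg hh₀.le hδ.le) (sub_nonneg.mpr he)]
  have hgub : ∀ s : ℝ, g s ≤ h₀ * (1 + δ) := by
    intro s
    rw [hg]
    beta_reduce
    have he := Real.exp_pos (-δ * s)
    nlinarith [mul_pos (mul_pos hh₀ hδ) he]
  have hgpos : ∀ s ≥ (0:ℝ), 0 < g s := by
    intro s hs
    have := hglb s hs
    nlinarith
  refine ⟨?_, ?_, ?_⟩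
  · intro t ht
    have hg0 := (hgpos t ht).ne'
    simp only [hw]
    have harg : π * g t / (2 * g t) = π / 2 := by
      field_simp
    rw [harg, Real.cos_pi_div_two, mul_zero]
  · intro t ht
    have hgt := hgpos t ht
    have hfun : (fun y => w t y) =
        fun y => ε * exp (-δ * t) * exp (β / 2 * (y - g t)) * cos (π * y / (2 * g t)) := by
      funext y; rw [hw]
    rw [hfun, (wx_deriv (ε * exp (-δ * t)) β (g t) (g t)).deriv, (hgderiv t).deriv]
    have harg : π * g t / (2 * g t) = π / 2 := by field_simp
    rw [sub_self, mul_zero, Real.exp_zero, harg, Real.cos_pi_div_two, Real.sin_pi_div_two]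
    have he := Real.exp_pos (-δ * t)
    have h2g : 0 < 2 * g t := by linarith
    rw [ge_iff_le, show -μ * (ε * exp (-δ * t) * 1 * (β / 2 * 0 - π / (2 * g t) * 1)) =
        μ * ε * exp (-δ * t) * π / (2 * g t) from by ring, div_le_iff₀ h2g]
    have hed : μ * ε * π = h₀ ^ 2 * δ ^ 2 * (1 + δ / 2) := by
      rw [hε]; field_simp
    have hkey := mul_le_mul_of_nonneg_left (hglb t ht)
      (show (0:ℝ) ≤ h₀ * δ ^ 2 * Real.exp (-δ * t) by positivity)
    nlinarith [hkey, hed, he.le]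
  · intro t ht x hx hxg
    have hgt : 0 < g t := hgpos t ht.le
    have hgne := hgt.ne'
    set A := ε * exp (-δ * t) with hA
    set E := exp (β / 2 * (x - g t)) with hE
    set C := cos (π * x / (2 * g t)) with hC
    set S := sin (π * x / (2 * g t)) with hS
    set G' := h₀ * δ ^ 2 / 2 * exp (-δ * t) with hG'
    have hwt : deriv (fun τ => w τ x) t =
        A * E * ((-δ - β / 2 * G') * C + S * (π * x * G' / (2 * (g t) ^ 2))) := by
      simp only [hw]
      exact (wt_deriv ε δ β x t g G' (hgderiv t) hgne).deriv
    have hfun : (fun y => w t y) =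
        fun y => A * exp (β / 2 * (y - g t)) * cos (π * y / (2 * g t)) := by
      funext y; rw [hw]
    have hd1 : deriv (fun y => w t y) =
        fun y => A * exp (β / 2 * (y - g t)) *
          (β / 2 * cos (π * y / (2 * g t)) - π / (2 * g t) * sin (π * y / (2 * g t))) := by
      funext y
      rw [hfun]
      exact (wx_deriv A β (g t) y).deriv
    have hwxx : deriv (deriv (fun y => w t y)) x =
        A * E * ((β ^ 2 / 4 - π ^ 2 / (4 * (g t) ^ 2)) * C - β * π / (2 * g t) * S) := by
      rw [hd1]
      exact (wxx_deriv A β (g t) hgne x).deriv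
    have hwxv : deriv (fun y => w t y) x = A * E * (β / 2 * C - π / (2 * g t) * S) := by
      rw [hd1]
    have hargl : 0 ≤ π * x / (2 * g t) := by positivity
    have hargu : π * x / (2 * g t) ≤ π / 2 := by
      calc π * x / (2 * g t) ≤ π * g t / (2 * g t) := by
            apply div_le_div_of_nonneg_right ?_ (by linarith)
            exact mul_le_mul_of_nonneg_left hxg hπ.le
        _ = π / 2 := by field_simp
    have hCnn : 0 ≤ C := Real.cos_nonneg_of_mem_Icc ⟨by linarith, hargu⟩
    have hSnn : 0 ≤ S := Real.sin_nonneg_of_nonneg_of_le_pi hargl (by linarith)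
    have hAp : 0 < A := by positivity
    have hEp : 0 < E := Real.exp_pos _
    have hwval : w t x = A * E * C := by simp only [hw]; rfl
    have hwnn : 0 ≤ w t x := by
      rw [hwval]; exact mul_nonneg (by positivity) hCnn
    have hfw : f (w t x) ≤ deriv f 0 * (A * E * C) := by
      rw [← hwval]; exact hfle _ hwnn
    have hb2 : deriv f 0 ≤ β ^ 2 / 4 := by
      nlinarith [Real.sq_sqrt hf'0.le, Real.sqrt_nonneg (deriv f 0)]
    have hG'nn : 0 ≤ G' := by positivity
    have hQ : δ + β / 2 * G' ≤ π ^ 2 / (4 * (g t) ^ 2) := by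
      have key : (4 * δ + β * h₀ * δ ^ 2) * (h₀ ^ 2 * (1 + δ) ^ 2) ≤ π ^ 2 := by
        rw [ge_iff_le, le_div_iff₀ (by positivity)] at hδsmall
        exact hδsmall
      rw [le_div_iff₀ (by positivity)]
      have he1 : exp (-δ * t) ≤ 1 := Real.exp_le_one_iff.mpr (by nlinarith)
      have he0 := Real.exp_pos (-δ * t)
      have hgu := hgub t
      have hg2 : (g t) ^ 2 ≤ (h₀ * (1 + δ)) ^ 2 := by nlinarith
      have hfac : δ + β / 2 * G' ≤ δ + β * h₀ * δ ^ 2 / 4 := by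
        rw [hG']
        nlinarith [mul_le_mul_of_nonneg_left he1 (show (0:ℝ) ≤ β * h₀ * δ ^ 2 by positivity)]
      calc (δ + β / 2 * G') * (4 * (g t) ^ 2)
          ≤ (δ + β * h₀ * δ ^ 2 / 4) * (4 * (h₀ * (1 + δ)) ^ 2) := by
            apply mul_le_mul hfac (by linarith [hg2]) (by positivity)
            positivity
        _ = (4 * δ + β * h₀ * δ ^ 2) * (h₀ ^ 2 * (1 + δ) ^ 2) := by ring
        _ ≤ π ^ 2 := key
    rw [hwt, hwxx, hwxv]
    have hSterm : 0 ≤ S * (π * x * G' / (2 * (g t) ^ 2)) :=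
      mul_nonneg hSnn (by positivity)
    have hcoef : 0 ≤ (-δ - β / 2 * G' + β ^ 2 / 4 + π ^ 2 / (4 * (g t) ^ 2)) - deriv f 0 := by
      linarith
    have h3 : 0 ≤ A * E * (((-δ - β / 2 * G' + β ^ 2 / 4 + π ^ 2 / (4 * (g t) ^ 2))
          - deriv f 0) * C + S * (π * x * G' / (2 * (g t) ^ 2))) :=
      mul_nonneg (mul_nonneg hAp.le hEp.le)
        (add_nonneg (mul_nonneg hcoef hCnn) hSterm)
    have h4 : A * E * ((-δ - β / 2 * G') * C + S * (π * x * G' / (2 * (g t) ^ 2)))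
        - A * E * ((β ^ 2 / 4 - π ^ 2 / (4 * (g t) ^ 2)) * C - β * π / (2 * g t) * S)
        + β * (A * E * (β / 2 * C - π / (2 * g t) * S)) - deriv f 0 * (A * E * C)
        = A * E * (((-δ - β / 2 * G' + β ^ 2 / 4 + π ^ 2 / (4 * (g t) ^ 2))
          - deriv f 0) * C + S * (π * x * G' / (2 * (g t) ^ 2))) := by ring
    linarith [h3, hfw, h4]
end

section
/- Let f be C¹ on [0,∞) with f(1) = 0 and f'(1) < 0, σ ∈ (0, −f'(1)), ς ∈ (0,1) with σ ≤ −f'(u) for u ∈ [1−ς, 1+ς]. Let ṽ : ℝ → [0,1] be nondecreasing with ṽ'' − βṽ' + f(ṽ) = 0, and let M, T, κ > 0 with Me^{−σT} ≤ ς. Define l̄(t) = κM(e^{−σt} − e^{−σT}) − x* and ū(t,x) = (1 + Me^{−σt})ṽ(x − l̄(t)). Then for t ≥ T and z = x − l̄(t) with ṽ(z) ≥ 1 − ς: ū_t − ū_{xx} + βū_x − f(ū) ≥ Me^{−σt}ṽ(z)[−σ − f'(ṽ(z) + θMe^{−σt}ṽ(z))] ≥ 0, where θ ∈ (0,1) is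 given by the mean value theorem applied to f between ṽ(z) and (1+Me^{−σt})ṽ(z). -/
set_option maxHeartbeats 1000000

open Real Set

private lemma mono_deriv_nonneg' (v : ℝ → ℝ) (hv : Monotone v) (z : ℝ) : 0 ≤ deriv v z := by
  by_cases h : DifferentiableAt ℝ v z
  · have h1 := h.hasDerivAt
    rw [hasDerivAt_iff_tendsto_slope] at h1
    have h2 : Filter.Tendsto (slope v z) (nhdsWithin z (Ioi z)) (nhds (deriv v z)) :=
      h1.mono_left (nhdsWithin_mono _ (fun y hy => ne_of_gt hy))
    refine ge_of_tendsto h2 ?_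
    filter_upwards [self_mem_nhdsWithin] with y hy
    rw [slope_def_field]
    exact div_nonneg (sub_nonneg.2 (hv (le_of_lt hy))) (sub_nonneg.2 (le_of_lt hy))
  · simp [deriv_zero_of_not_differentiableAt h]

theorem stmt18 (f : ℝ → ℝ) (β σ ς M T κ x' : ℝ) (v : ℝ → ℝ)
    (hf : ContDiffOn ℝ 1 f (Ici 0))
    (hf1 : f 1 = 0) (hf'1 : deriv f 1 < 0)
    (hσ : 0 < σ) (hσ' : σ < -deriv f 1)
    (hς : 0 < ς) (hς1 : ς < 1)
    (hderiv : ∀ u ∈ Icc (1 - ς) (1 + ς), σ ≤ -deriv f u)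
    (hvmono : Monotone v)
    (hvrange : ∀ z, 0 ≤ v z ∧ v z ≤ 1)
    (hvode : ∀ z : ℝ, deriv (deriv v) z - β * deriv v z + f (v z) = 0)
    (hM : 0 < M) (hT : 0 < T) (hκ : 0 < κ) (hx' : 0 < x')
    (hMT : M * exp (-σ * T) ≤ ς)
    (l : ℝ → ℝ) (hl : l = fun t => κ * M * (exp (-σ * t) - exp (-σ * T)) - x')
    (u : ℝ → ℝ → ℝ)
    (hu : u = fun t x => (1 + M * exp (-σ * t)) * v (x - l t)) :
    ∀ t ≥ T, ∀ x : ℝ, 1 - ς ≤ v (x - l t) →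
      ∃ θ ∈ Ioo (0:ℝ) 1,
        M * exp (-σ * t) * v (x - l t) *
            (-σ - deriv f (v (x - l t) + θ * M * exp (-σ * t) * v (x - l t)))
          ≤ deriv (fun τ => u τ x) t - deriv (deriv (fun y => u t y)) x
              + β * deriv (fun y => u t y) x - f (u t x) ∧
        0 ≤ M * exp (-σ * t) * v (x - l t) *
            (-σ - deriv f (v (x - l t) + θ * M * exp (-σ * t) * v (x - l t))) := by
  intro t ht x hz
  simp only [hu, hl] at hz ⊢
  set z : ℝ := x - (κ * M * (exp (-σ * t) - exp (-σ * T)) - x') with hzdef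
  set a : ℝ := M * exp (-σ * t) with hadef
  have he : (0:ℝ) < exp (-σ * t) := exp_pos _
  have ha : 0 < a := mul_pos hM he
  have haς : a ≤ ς := by
    refine le_trans ?_ hMT
    rw [hadef]
    have : exp (-σ * t) ≤ exp (-σ * T) := exp_le_exp.2 (by nlinarith)
    nlinarith
  have h0 : 0 ≤ v z := (hvrange z).1
  have h1 : v z ≤ 1 := (hvrange z).2
  have hvzpos : 0 < v z := lt_of_lt_of_le (by linarith) hz
  have hav : 0 < a * v z := mul_pos ha hvzpos
  -- differentiability of f on positive reals
  have hfd : ∀ y : ℝ, 0 < y → DifferentiableAt ℝ f y := fun y hy =>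
    (hf.contDiffAt (Ici_mem_nhds hy)).differentiableAt one_ne_zero
  -- mean value theorem
  have hAB : v z < (1 + a) * v z := by nlinarith
  obtain ⟨c, hc, hslope⟩ := exists_deriv_eq_slope f hAB
    (fun y hy => (hfd y (lt_of_lt_of_le (by linarith) hy.1)).continuousAt.continuousWithinAt)
    (fun y hy => (hfd y (lt_of_lt_of_le (by linarith) hy.1.le)).differentiableWithinAt)
  have hBA : (1 + a) * v z - v z = a * v z := by ring
  have hfc : f ((1 + a) * v z) = f (v z) + a * v z * deriv f c := by
    rw [hBA] at hslope
    field_simp at hslope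
    linarith
  have hcmem : c ∈ Icc (1 - ς) (1 + ς) := by
    constructor
    · exact le_trans hz hc.1.le
    · have : (1 + a) * v z ≤ 1 + ς := by nlinarith
      linarith [hc.2]
  have hfc' : σ ≤ -deriv f c := hderiv c hcmem
  -- f (v z) ≥ 0
  have hanti : StrictAntiOn f (Icc (1 - ς) (1 + ς)) := by
    refine strictAntiOn_of_deriv_neg (convex_Icc _ _)
      (fun y hy => (hfd y (by linarith [hy.1])).continuousAt.continuousWithinAt) ?_
    intro y hy
    rw [interior_Icc] at hy
    have := hderiv y (Ioo_subset_Icc_self hy)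
    linarith
  have hfv : 0 ≤ f (v z) := by
    rcases eq_or_lt_of_le h1 with heq | hlt
    · rw [heq, hf1]
    · have := hanti ⟨hz, by linarith⟩ ⟨by linarith, by linarith⟩ hlt
      rw [hf1] at this
      exact this.le
  -- θ
  set θ : ℝ := (c - v z) / (a * v z) with hθdef
  have hθ0 : 0 < θ := div_pos (by linarith [hc.1]) hav
  have hθ1 : θ < 1 := (div_lt_one hav).2 (by nlinarith [hc.2])
  have hθc : v z + θ * M * exp (-σ * t) * v z = c := by
    have h2 : θ * (a * v z) = c - v z := div_mul_cancel₀ _ hav.ne'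
    rw [hadef] at h2
    nlinarith [h2]
  -- spatial derivatives
  have hd1 : deriv (fun y => (1 + a) * v (y - (κ * M * (exp (-σ * t) - exp (-σ * T)) - x'))) x
      = (1 + a) * deriv v z := by
    rw [deriv_const_mul_field, deriv_comp_sub_const]
  have hfun : (deriv (fun y => (1 + a) * v (y - (κ * M * (exp (-σ * t) - exp (-σ * T)) - x'))))
      = fun y => (1 + a) * deriv v (y - (κ * M * (exp (-σ * t) - exp (-σ * T)) - x')) := by
    funext y
    rw [deriv_const_mul_field, deriv_comp_sub_const]
  have hd2 : deriv (deriv (fun y => (1 + a) * v (y - (κ * M * (exp (-σ * t) - exp (-σ * T)) - x')))) x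
      = (1 + a) * deriv (deriv v) z := by
    rw [hfun, deriv_const_mul_field, deriv_comp_sub_const]
  have hode := hvode z
  refine ⟨θ, ⟨hθ0, hθ1⟩, ?_⟩
  rw [hθc, hd1, hd2]
  constructor
  · -- main inequality
    by_cases hdv : DifferentiableAt ℝ v z
    · -- time derivative via chain rule
      have h1 : HasDerivAt (fun τ : ℝ => -σ * τ) (-σ) t := by
        simpa using (hasDerivAt_id t).const_mul (-σ)
      have h2 : HasDerivAt (fun τ : ℝ => exp (-σ * τ)) (exp (-σ * t) * -σ) t := h1.exp
      have hinner : HasDerivAt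
          (fun τ : ℝ => x - (κ * M * (exp (-σ * τ) - exp (-σ * T)) - x'))
          (-(κ * M * (exp (-σ * t) * -σ))) t :=
        (((h2.sub_const (exp (-σ * T))).const_mul (κ * M)).sub_const x').const_sub x
      have hcomp : HasDerivAt (fun τ : ℝ => v (x - (κ * M * (exp (-σ * τ) - exp (-σ * T)) - x')))
          (deriv v z * -(κ * M * (exp (-σ * t) * -σ))) t := by
        have := (hdv.hasDerivAt).comp t hinner
        exact this
      have hfac : HasDerivAt (fun τ : ℝ => 1 + M * exp (-σ * τ)) (M * (exp (-σ * t) * -σ)) t :=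
        (h2.const_mul M).const_add 1
      have htot := hfac.mul hcomp
      have hdt : deriv (fun τ : ℝ => (1 + M * exp (-σ * τ)) *
          v (x - (κ * M * (exp (-σ * τ) - exp (-σ * T)) - x'))) t
          = M * (exp (-σ * t) * -σ) * v z
            + (1 + M * exp (-σ * t)) * (deriv v z * -(κ * M * (exp (-σ * t) * -σ))) :=
        htot.deriv
      rw [hdt]
      have hdv0 : 0 ≤ deriv v z := mono_deriv_nonneg' v hvmono z
      rw [hadef] at hfc hav ⊢
      nlinarith [hode, hfc, mul_nonneg (mul_nonneg (mul_nonneg hκ.le hσ.le) hav.le) hdv0,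
        mul_nonneg (mul_nonneg (mul_nonneg (mul_nonneg hκ.le hσ.le) (mul_pos hM he).le)
          (mul_pos hM he).le) hdv0,
        mul_nonneg (mul_pos hM he).le hfv, mul_nonneg (mul_pos hM he).le hvzpos.le]
    · -- non-differentiable case
      have hvz0 : deriv v z = 0 := deriv_zero_of_not_differentiableAt hdv
      have hκM : (0:ℝ) < κ * M := mul_pos hκ hM
      set A : ℝ → ℝ := fun w => (x + x' - w) / (κ * M) + exp (-σ * T) with hAdef
      have hAz : A z = exp (-σ * t) := by
        rw [hAdef]
        simp only [hzdef]
        field_simp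
        ring
      have hApos : 0 < A z := by rw [hAz]; exact he
      set φ : ℝ → ℝ := fun w => -(1 / σ) * Real.log (A w) with hφdef
      have hφz : φ z = t := by
        rw [hφdef]
        simp only [hAz, Real.log_exp]
        field_simp
      have hAdiff : DifferentiableAt ℝ A z := by
        apply DifferentiableAt.add_const
        exact (differentiable_const _).sub differentiable_id |>.differentiableAt.div_const _
      have hφdiff : DifferentiableAt ℝ φ z :=
        ((Real.differentiableAt_log hApos.ne').comp z hAdiff).const_mul _
      have hAcont : ContinuousAt A z := hAdiff.continuousAt
      have hev : ∀ᶠ w in nhds z, 0 < A w := hAcont.eventually (eventually_gt_nhds hApos)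
      have hFnd : ¬ DifferentiableAt ℝ (fun τ : ℝ => (1 + M * exp (-σ * τ)) *
          v (x - (κ * M * (exp (-σ * τ) - exp (-σ * T)) - x'))) t := by
        intro hF
        apply hdv
        have hkey : ∀ w : ℝ, 0 < A w →
            v w = ((1 + M * exp (-σ * φ w)) *
              v (x - (κ * M * (exp (-σ * φ w) - exp (-σ * T)) - x')))
                / (1 + M * exp (-σ * φ w)) := by
          intro w hw
          have hexp : exp (-σ * φ w) = A w := by
            rw [hφdef]
            have : -σ * (-(1 / σ) * Real.log (A w)) = Real.log (A w) := by
              field_simp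
            rw [this, Real.exp_log hw]
          have harg : x - (κ * M * (exp (-σ * φ w) - exp (-σ * T)) - x') = w := by
            rw [hexp, hAdef]
            field_simp
            ring
          rw [harg]
          have hden : 0 < 1 + M * exp (-σ * φ w) := by positivity
          field_simp
        have hq : DifferentiableAt ℝ (fun w => ((1 + M * exp (-σ * φ w)) *
            v (x - (κ * M * (exp (-σ * φ w) - exp (-σ * T)) - x')))
              / (1 + M * exp (-σ * φ w))) z := by
          have hnum : DifferentiableAt ℝ (fun w => (1 + M * exp (-σ * (φ w))) *
              v (x - (κ * M * (exp (-σ * (φ w)) - exp (-σ * T)) - x'))) z := by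
            have := (hφz.symm ▸ hF).comp z hφdiff
            exact this
          have hden : DifferentiableAt ℝ (fun w => 1 + M * exp (-σ * φ w)) z := by
            have : DifferentiableAt ℝ (fun w => exp (-σ * φ w)) z :=
              (Real.differentiable_exp.differentiableAt).comp z
                ((differentiable_const (-σ)).differentiableAt.mul hφdiff)
            exact (this.const_mul M).const_add 1
          refine hnum.div hden ?_
          have : exp (-σ * φ z) = A z := by
            rw [hφz, hAz]
          positivity
        refine hq.congr_of_eventuallyEq ?_
        filter_upwards [hev] with w hw
        exact hkey w hw
      have hdt0 : deriv (fun τ : ℝ => (1 + M * exp (-σ * τ)) *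
          v (x - (κ * M * (exp (-σ * τ) - exp (-σ * T)) - x'))) t = 0 :=
        deriv_zero_of_not_differentiableAt hFnd
      rw [hdt0, hvz0]
      rw [hvz0] at hode
      rw [hadef] at hfc ⊢
      nlinarith [mul_nonneg (mul_pos hM he).le hfv,
        mul_nonneg (mul_pos hM he).le hvzpos.le]
  · -- second inequality
    exact mul_nonneg (mul_nonneg ha.le h0) (by linarith)
end
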